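/- arXiv:1309.7550 — 2 statements merged into one kernel-verified Lean document; each statement's English description precedes it below -/
import Mathlib

section
/- Let X_1,…,X_n be i.i.d. {−1,+1}-valued random variables with E[X_i] = h where 0 < h ≤ 1/2, and let ξ = (1/n)∑X_i. Then P(ξ ≤ 0) ≥ c·e^{−h^2 n}·e^{−h√n/4} for a universal constant c > 0. -/
open MeasureTheory ENNReal


lemma lem_central : ∀ m : ℕ, 1 ≤ m → 16 ^ m ≤ 4 * m * (Nat.centralBinom m) ^ 2 := by
  intro m hm
  induction m with
  | zero => omega
  | succ k ih =>
    rcases Nat.eq_or_lt_of_le hm with h1 | h1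
    · simp [← h1]
      rw [show Nat.centralBinom 1 = 2 from rfl]
      norm_num
    · have hk : 1 ≤ k := by omega
      have IH := ih hk
      have key := Nat.succ_mul_centralBinom_succ k
      have hmul : (k+1) * (16 ^ (k+1)) ≤ (k+1) * (4 * (k+1) * (Nat.centralBinom (k+1))^2) := by
        have h2 : (k+1) * (4 * (k+1) * (Nat.centralBinom (k+1))^2)
            = 4 * ((k+1) * Nat.centralBinom (k+1))^2 := by ring
        rw [h2, key]
        have h3 : 4 * (2*(2*k+1) * Nat.centralBinom k)^2
            = 16 * ((2*k+1)^2 * (Nat.centralBinom k)^2) := by ring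
        rw [h3]
        have h4 : (k+1) * 16^(k+1) = 16 * ((k+1) * 16^k) := by ring
        rw [h4]
        have h5 : (k+1) * 16^k ≤ (k+1) * (4*k*(Nat.centralBinom k)^2) :=
          Nat.mul_le_mul_left _ IH
        refine le_trans (Nat.mul_le_mul_left _ h5) ?_
        refine Nat.mul_le_mul_left _ ?_
        nlinarith [sq_nonneg (Nat.centralBinom k)]
      exact Nat.le_of_mul_le_mul_left hmul (by omega)



lemma lem_choose_half (n : ℕ) (hn : 1 ≤ n) :
    (2:ℝ)^n ≤ 4 * Real.sqrt n * (n.choose (n/2)) := by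
  have hsq : ∀ a b : ℝ, 0 ≤ a → 0 ≤ b → a^2 ≤ b^2 → a ≤ b := by
    intro a b ha hb hab
    nlinarith
  apply hsq _ _ (by positivity) (by positivity)
  have hs : Real.sqrt n ^ 2 = n := Real.sq_sqrt (by positivity)
  have hexp : (4 * Real.sqrt n * (n.choose (n/2)))^2
      = 16 * n * (n.choose (n/2))^2 := by
    rw [mul_pow, mul_pow, hs]; ring
  rw [hexp]
  rcases Nat.even_or_odd n with he | ho
  · obtain ⟨m, hm⟩ := he
    have hm1 : 1 ≤ m := by omega
    have hnd : n / 2 = m := by omega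
    have hc : n.choose (n/2) = Nat.centralBinom m := by
      rw [hnd, Nat.centralBinom_eq_two_mul_choose]; congr 1; omega
    have h1 := lem_central m hm1
    have h1r : (16:ℝ)^m ≤ 4 * m * (Nat.centralBinom m)^2 := by exact_mod_cast h1
    have h2 : ((2:ℝ)^n)^2 = 16^m := by
      rw [← pow_mul, show n * 2 = 4 * m by omega, pow_mul]; norm_num
    rw [h2, hc]
    have : (m:ℝ) * 4 ≤ 16 * n := by
      have : (n:ℝ) = 2*m := by rw [hm]; push_cast; ring
      nlinarith [Nat.cast_nonneg (α := ℝ) m]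
    nlinarith [sq_nonneg ((Nat.centralBinom m : ℝ))]
  · obtain ⟨m, hm⟩ := ho
    have hnd : n / 2 = m := by omega
    rcases Nat.eq_zero_or_pos m with h0 | hm1
    · subst h0
      have : n = 1 := by omega
      subst this
      norm_num
    have hc : (Nat.centralBinom m : ℝ) ≤ n.choose (n/2) := by
      rw [hnd, Nat.centralBinom_eq_two_mul_choose]
      exact_mod_cast Nat.choose_le_choose m (by omega)
    have h1 := lem_central m hm1
    have h1r : (16:ℝ)^m ≤ 4 * m * (Nat.centralBinom m)^2 := by exact_mod_cast h1
    have h2 : ((2:ℝ)^n)^2 = 4 * 16^m := by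
      rw [← pow_mul, show n * 2 = 4 * m + 2 by omega, pow_add, pow_mul]; norm_num; ring
    rw [h2]
    have hmn : (m:ℝ) ≤ n := by exact_mod_cast Nat.le_of_lt (by omega)
    have hcb : (0:ℝ) ≤ Nat.centralBinom m := by positivity
    have hch : (0:ℝ) ≤ n.choose (n/2) := by positivity
    have hsq2 : (Nat.centralBinom m : ℝ)^2 ≤ (n.choose (n/2) : ℝ)^2 :=
      pow_le_pow_left₀ hcb hc 2
    nlinarith [pow_nonneg (by norm_num : (0:ℝ) ≤ 16) m, sq_nonneg ((n.choose (n/2):ℝ))]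


lemma lem_exp_lb (x : ℝ) (h0 : 0 ≤ x) (h1 : x ≤ 1/2) : Real.exp (-(2*x)) ≤ 1 - x := by
  have h2 : 2*x + 1 ≤ Real.exp (2*x) := Real.add_one_le_exp (2*x)
  have h3 : (0:ℝ) < Real.exp (2*x) := Real.exp_pos _
  have h4 : (0:ℝ) < 1 - x := by linarith
  rw [Real.exp_neg, inv_le_comm₀ h3 h4]
  nlinarith [mul_inv_cancel₀ (ne_of_gt h4), inv_pos.mpr h4,
    mul_le_mul_of_nonneg_left h2 (le_of_lt h4)]

lemma lem_ratio (h : ℝ) (h0 : 0 < h) (h2 : h ≤ 1/2) :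
    Real.exp (-(3*h)) ≤ (1-h)/(1+h) := by
  have hp : (0:ℝ) < 1 + h := by linarith
  have h1 : (0:ℝ) < 1 - h := by linarith
  have he : 1 + h ≤ Real.exp h := by linarith [Real.add_one_le_exp h]
  have he3 : (1+h)^3 ≤ Real.exp (3*h) := by
    calc (1+h)^3 ≤ (Real.exp h)^3 := pow_le_pow_left₀ (by linarith) he 3
    _ = Real.exp (3*h) := by rw [← Real.exp_nat_mul]; norm_num
  rw [Real.exp_neg, inv_le_comm₀ (Real.exp_pos _) (div_pos h1 hp), inv_div,
    div_le_iff₀ h1]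
  have hpoly : 1 + h ≤ (1+h)^3*(1-h) := by 
    have hq : h^2 ≤ 1/4 := by nlinarith
    have hcub : h^3 ≤ 1/8 := by nlinarith
    have key : 0 ≤ h * (1 - 2*h^2 - h^3) := mul_nonneg h0.le (by nlinarith)
    nlinarith [key]
  calc 1 + h ≤ (1+h)^3*(1-h) := hpoly
  _ ≤ Real.exp (3*h) * (1-h) := mul_le_mul_of_nonneg_right he3 (le_of_lt h1)


lemma lem_choose_ratio (n m : ℕ) (hn : 1 ≤ n) (hmdef : m = min (Nat.sqrt n / 4) (n / 2)) :
    ∀ j, j ≤ m →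
    (n.choose (n/2) : ℝ) * (1 - 4 * (m:ℝ) / n) ^ j ≤ (n.choose (n/2 - j) : ℝ) := by
  set M := n / 2 with hM
  have hs2 : Nat.sqrt n * Nat.sqrt n ≤ n := Nat.sqrt_le n
  have h4m : 4 * m ≤ Nat.sqrt n := by
    have := Nat.div_mul_le_self (Nat.sqrt n) 4
    have hle : m ≤ Nat.sqrt n / 4 := hmdef ▸ min_le_left _ _
    omega
  have hmM : m ≤ M := hmdef ▸ min_le_right _ _
  have h2M : 2 * M ≤ n := by omega
  have hN2 : n ≤ 2 * M + 1 := by omega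
  have hNpos : (0:ℝ) < n := by exact_mod_cast hn
  have halpha : (0:ℝ) ≤ 1 - 4 * (m:ℝ) / n := by
    rw [sub_nonneg, div_le_one hNpos]
    have : 4 * m ≤ n := le_trans h4m (Nat.sqrt_le_self n)
    exact_mod_cast this
  intro j
  induction j with
  | zero => simp
  | succ j ih =>
    intro hj1
    have hj : j ≤ m := by omega
    have IH := ih hj
    have hjM : j + 1 ≤ M := le_trans hj1 hmM
    obtain ⟨k, hk⟩ : ∃ k, M - j = k + 1 := ⟨M - j - 1, by omega⟩
    have hkk : M - (j+1) = k := by omega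
    have hkM : k + 1 ≤ M := by omega
    have hkn : k ≤ n := by omega
    have hid := Nat.choose_succ_right_eq n k
    have hidR : (n.choose (k+1) : ℝ) * (k+1) = (n.choose k : ℝ) * ((n:ℝ) - k) := by
      have h := congrArg (fun x : ℕ => (x : ℝ)) hid
      push_cast [Nat.cast_sub hkn] at h
      linarith [h]
    have hm1 : 1 ≤ m := by omega
    have hkMj : (k:ℝ) = (M:ℝ) - j - 1 := by
      have h : k + 1 + j = M := by omega
      have h2 := congrArg (fun x : ℕ => (x : ℝ)) h
      push_cast at h2; linarith
    have hjm : (j:ℝ) ≤ (m:ℝ) - 1 := by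
      have : (j:ℝ) + 1 ≤ m := by exact_mod_cast hj1
      linarith
    have h2MR : 2*(M:ℝ) ≤ n := by exact_mod_cast h2M
    have hN2R : (n:ℝ) ≤ 2*(M:ℝ)+1 := by exact_mod_cast hN2
    have key : (1 - 4 * (m:ℝ) / n) * ((n:ℝ) - k) ≤ (k:ℝ) + 1 := by
      have heq : (1 - 4*(m:ℝ)/n) = ((n:ℝ) - 4*m)/n := by field_simp
      rw [heq, div_mul_eq_mul_div, div_le_iff₀ hNpos]
      rw [hkMj]
      nlinarith [mul_le_mul_of_nonneg_left hjm hNpos.le,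
        mul_le_mul_of_nonneg_left h2MR (by positivity : (0:ℝ) ≤ (m:ℝ)),
        mul_le_mul_of_nonneg_left hN2R hNpos.le,
        mul_nonneg (by positivity : (0:ℝ) ≤ (m:ℝ)) (by positivity : (0:ℝ) ≤ (j:ℝ)),
        (by positivity : (0:ℝ) ≤ (m:ℝ))]
    have hnk : (0:ℝ) < (n:ℝ) - k := by
      have h : k < n := by omega
      have h2 := (Nat.cast_lt (α := ℝ)).mpr h
      linarith
    have hstep : (n.choose (k+1) : ℝ) * (1 - 4 * (m:ℝ) / n) ≤ (n.choose k : ℝ) := by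
      rw [← mul_le_mul_iff_of_pos_right hnk]
      calc (n.choose (k+1) : ℝ) * (1 - 4 * (m:ℝ) / n) * ((n:ℝ) - k)
          = (n.choose (k+1) : ℝ) * ((1 - 4 * (m:ℝ) / n) * ((n:ℝ) - k)) := by ring
        _ ≤ (n.choose (k+1) : ℝ) * ((k:ℝ)+1) := by
            exact mul_le_mul_of_nonneg_left key (by positivity)
        _ = (n.choose k : ℝ) * ((n:ℝ) - k) := hidR
    calc (n.choose M : ℝ) * (1 - 4 * (m:ℝ) / n) ^ (j+1)
        = ((n.choose M : ℝ) * (1 - 4 * (m:ℝ) / n) ^ j) * (1 - 4 * (m:ℝ) / n) := by ring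
      _ ≤ (n.choose (M - j) : ℝ) * (1 - 4 * (m:ℝ) / n) := by
          exact mul_le_mul_of_nonneg_right IH halpha
      _ = (n.choose (k+1) : ℝ) * (1 - 4 * (m:ℝ) / n) := by rw [hk]
      _ ≤ (n.choose k : ℝ) := hstep
      _ = (n.choose (M - (j+1)) : ℝ) := by rw [hkk]



set_option maxHeartbeats 1000000 in
lemma key_real (n : ℕ) (hn : 1 ≤ n) (h : ℝ) (h0 : 0 < h) (h2 : h ≤ 1/2) :
    Real.exp (-4)/256 * Real.exp (-h^2*n) * Real.exp (-(h*Real.sqrt n)/4) ≤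
    ∑ j ∈ Finset.range (min (Nat.sqrt n / 4) (n/2) + 1),
      (n.choose (n/2 - j) : ℝ) *
        (((1+h)/2)^(n/2 - j) * ((1-h)/2)^(n - (n/2 - j))) := by
  set M := n / 2 with hM
  set m := min (Nat.sqrt n / 4) M with hm
  set q : ℝ := (1+h)/2 with hqdef
  set r : ℝ := (1-h)/2 with hrdef
  have hq : (0:ℝ) < q := by rw [hqdef]; linarith
  have hr : (0:ℝ) < r := by rw [hrdef]; linarith
  have hNpos : (0:ℝ) < n := by exact_mod_cast hn
  have hupos : (0:ℝ) < Real.sqrt n := Real.sqrt_pos.mpr hNpos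
  have hs2 : Nat.sqrt n * Nat.sqrt n ≤ n := Nat.sqrt_le n
  have h4m : 4 * m ≤ Nat.sqrt n := by
    have := Nat.div_mul_le_self (Nat.sqrt n) 4
    have hle : m ≤ Nat.sqrt n / 4 := min_le_left _ _
    omega
  have hmM : m ≤ M := min_le_right _ _
  have h2M : 2 * M ≤ n := by omega
  have hN2 : n ≤ 2 * M + 1 := by omega
  -- Step A : central term bound
  have stepA : Real.exp (-h^2*n)/(8*Real.sqrt n) ≤ (n.choose M : ℝ) * (q^M * r^(n-M)) := by
    set e := n - 2*M with he0
    have he2 : e = 0 ∨ e = 1 := by omega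
    have hqr : q * r = (1-h^2)/4 := by rw [hqdef, hrdef]; ring
    have h1h2pos : (0:ℝ) < 1 - h^2 := by nlinarith
    have hA1 : Real.exp (-h^2*(n:ℝ)) ≤ (1-h^2)^M := by
      have hx : h^2 ≤ 1/2 := by nlinarith
      have hlb := lem_exp_lb (h^2) (by positivity) hx
      have h2MR : 2*(M:ℝ) ≤ n := by exact_mod_cast h2M
      calc Real.exp (-h^2*(n:ℝ)) ≤ Real.exp (-(2*h^2)*M) := by
            apply Real.exp_le_exp.mpr
            nlinarith [sq_nonneg h, Nat.cast_nonneg (α := ℝ) M]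
        _ = Real.exp (-(2*h^2)) ^ M := by rw [← Real.exp_nat_mul]; ring_nf
        _ ≤ (1-h^2)^M := by
            exact pow_le_pow_left₀ (le_of_lt (Real.exp_pos _)) hlb M
    have hsplitA : q^M * r^(n-M) = (1-h^2)^M / 4^M * r^e := by
      rw [show n - M = M + e by omega, pow_add]
      have hh : q^M * (r^M * r^e) = (q*r)^M * r^e := by rw [mul_pow]; ring
      rw [hh, hqr, div_pow]
    have h2n : (2:ℝ)^n = 4^M * 2^e := by
      rw [show n = 2*M + e by omega, pow_add, pow_mul]; norm_num
    have hre : (1:ℝ)/2 ≤ 2^e * r^e := by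
      rcases he2 with hee | hee <;> rw [hee]
      · norm_num
      · rw [pow_one, pow_one, hrdef]; linarith
    have hchalf := lem_choose_half n hn
    have hC : (2:ℝ)^n / (4*Real.sqrt n) ≤ (n.choose M : ℝ) := by
      rw [div_le_iff₀ (by positivity)]
      calc (2:ℝ)^n ≤ 4*Real.sqrt n*(n.choose (n/2)) := hchalf
        _ = (n.choose M : ℝ) * (4*Real.sqrt n) := by rw [hM]; ring
    rw [hsplitA]
    calc Real.exp (-h^2*(n:ℝ))/(8*Real.sqrt n)
        = (Real.exp (-h^2*(n:ℝ)) * (1/2)) / (4*Real.sqrt n) := by ring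
      _ ≤ ((1-h^2)^M * (2^e*r^e)) / (4*Real.sqrt n) := by
          gcongr ?_ / (4*Real.sqrt n)
          exact mul_le_mul hA1 hre (by norm_num) (pow_nonneg h1h2pos.le M)
      _ = ((2:ℝ)^n/(4*Real.sqrt n)) * ((1-h^2)^M / 4^M * r^e) := by
          rw [h2n]
          field_simp
      _ ≤ (n.choose M : ℝ) * ((1-h^2)^M / 4^M * r^e) := by
          apply mul_le_mul_of_nonneg_right hC
          have : (0:ℝ) ≤ (1-h^2)^M := by positivity
          positivity
  -- alpha facts
  set α : ℝ := 1 - 4 * (m:ℝ) / n with halphadef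
  have halpha0 : (0:ℝ) ≤ α := by
    rw [halphadef, sub_nonneg, div_le_one hNpos]
    have : 4 * m ≤ n := le_trans h4m (Nat.sqrt_le_self n)
    exact_mod_cast this
  have halpha1 : α ≤ 1 := by
    rw [halphadef]
    have : 0 ≤ 4 * (m:ℝ) / n := by positivity
    linarith
  have halpham : Real.exp (-(1/2)) ≤ α ^ m := by
    rcases Nat.eq_zero_or_pos m with h0m | h0m
    · rw [h0m, pow_zero]
      exact le_of_lt (Real.exp_lt_one_iff.mpr (by norm_num))
    · have h16 : 16 * m * m ≤ n := by
        calc 16 * m * m = (4*m) * (4*m) := by ring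
        _ ≤ Nat.sqrt n * Nat.sqrt n := Nat.mul_le_mul h4m h4m
        _ ≤ n := hs2
      have h16R : 16 * (m:ℝ) * m ≤ n := by exact_mod_cast h16
      have hmR : (1:ℝ) ≤ m := by exact_mod_cast h0m
      have hx : 4 * (m:ℝ) / n ≤ 1/2 := by
        rw [div_le_iff₀ hNpos]
        nlinarith
      have hxe : Real.exp (-(2*(4*(m:ℝ)/n))) ≤ α :=
        lem_exp_lb _ (by positivity) hx
      calc Real.exp (-(1/2)) ≤ Real.exp (-(2*(4*(m:ℝ)/n)) * m) := by
            apply Real.exp_le_exp.mpr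
            rw [neg_mul]
            apply neg_le_neg
            have heq : 2*(4*(m:ℝ)/n)*m = 8*((m:ℝ)*m)/n := by ring
            rw [heq, div_le_iff₀ hNpos]
            nlinarith
        _ = Real.exp (-(2*(4*(m:ℝ)/n))) ^ m := by rw [← Real.exp_nat_mul]; ring_nf
        _ ≤ α ^ m := pow_le_pow_left₀ (le_of_lt (Real.exp_pos _)) hxe m
  -- m' : truncation
  set m' : ℕ := min m (Nat.floor (1/h)) with hm'
  have hm'm : m' ≤ m := min_le_left _ _
  -- Step B : per-term bound
  have stepB : ∀ j ≤ m', Real.exp (-4) * (Real.exp (-h^2*n)/(8*Real.sqrt n)) ≤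
      (n.choose (M - j) : ℝ) * (q^(M - j) * r^(n - (M - j))) := by
    intro j hj
    have hjm : j ≤ m := le_trans hj hm'm
    have hchoose := lem_choose_ratio n m hn hm j hjm
    have hsplit : q^(M - j) * r^(n - (M - j)) = (q^M * r^(n-M)) * (r/q)^j := by
      have h1 : q^M = q^(M-j) * q^j := by rw [← pow_add]; congr 1; omega
      have h2 : r^(n - (M - j)) = r^(n-M) * r^j := by rw [← pow_add]; congr 1; omega
      rw [h1, h2, div_pow r q j]
      have hqj : q^j ≠ 0 := pow_ne_zero _ hq.ne'
      have key : ∀ a b c d : ℝ, d ≠ 0 → a * (b * c) = a * d * b * (c / d) := by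
        intro a b c d hd
        rw [mul_div_assoc', eq_div_iff hd]
        ring
      exact key _ _ _ _ hqj
    have hrq : Real.exp (-(3*h)) ≤ r/q := by
      have heq : r/q = (1-h)/(1+h) := by
        rw [hrdef, hqdef, div_div_div_cancel_right₀]
        norm_num
      rw [heq]
      exact lem_ratio h h0 h2
    have hrqj : Real.exp (-3) ≤ (r/q)^j := by
      have hjh : (j:ℝ) * h ≤ 1 := by
        have hjf : (j:ℝ) ≤ Nat.floor (1/h) := by
          exact_mod_cast le_trans hj (min_le_right _ _)
        have : (Nat.floor (1/h) : ℝ) ≤ 1/h := Nat.floor_le (by positivity)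
        have hjle : (j:ℝ) ≤ 1/h := le_trans hjf this
        calc (j:ℝ) * h ≤ (1/h) * h := by
              exact mul_le_mul_of_nonneg_right hjle h0.le
        _ = 1 := one_div_mul_cancel (ne_of_gt h0)
      calc Real.exp (-3) ≤ Real.exp (-(3*h) * j) := by
            apply Real.exp_le_exp.mpr
            nlinarith
        _ = Real.exp (-(3*h)) ^ j := by rw [← Real.exp_nat_mul]; ring_nf
        _ ≤ (r/q)^j := pow_le_pow_left₀ (le_of_lt (Real.exp_pos _)) hrq j
    have hCa : (n.choose M : ℝ) * Real.exp (-(1/2)) ≤ (n.choose (M - j) : ℝ) := by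
      calc (n.choose M : ℝ) * Real.exp (-(1/2)) ≤ (n.choose M : ℝ) * α ^ m := by
            exact mul_le_mul_of_nonneg_left halpham (by positivity)
        _ ≤ (n.choose M : ℝ) * α ^ j := by
            exact mul_le_mul_of_nonneg_left
              (pow_le_pow_of_le_one halpha0 halpha1 hjm) (by positivity)
        _ ≤ _ := hchoose
    rw [hsplit]
    have hqr0 : (0:ℝ) ≤ q^M * r^(n-M) := by positivity
    calc Real.exp (-4) * (Real.exp (-h^2*n)/(8*Real.sqrt n))
        ≤ (Real.exp (-(1/2)) * Real.exp (-3)) * (Real.exp (-h^2*n)/(8*Real.sqrt n)) := by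
          apply mul_le_mul_of_nonneg_right _ (by positivity)
          rw [← Real.exp_add]
          apply Real.exp_le_exp.mpr; norm_num
      _ ≤ (Real.exp (-(1/2)) * Real.exp (-3)) * ((n.choose M : ℝ) * (q^M * r^(n-M))) := by
          have := mul_le_mul_of_nonneg_left stepA
            (by positivity : (0:ℝ) ≤ Real.exp (-(1/2)) * Real.exp (-3))
          linarith
      _ = ((n.choose M : ℝ) * Real.exp (-(1/2))) * (q^M * r^(n-M)) * Real.exp (-3) := by ring
      _ ≤ (n.choose (M-j) : ℝ) * (q^M * r^(n-M)) * (r/q)^j := by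
          apply mul_le_mul
          · exact mul_le_mul_of_nonneg_right hCa hqr0
          · exact hrqj
          · positivity
          · positivity
      _ = (n.choose (M-j) : ℝ) * ((q^M * r^(n-M)) * (r/q)^j) := by ring
  -- Step C : sum over range
  have hterm0 : ∀ j ∈ Finset.range (m+1), (0:ℝ) ≤
      (n.choose (M - j) : ℝ) * (q^(M - j) * r^(n - (M - j))) := by
    intro j _
    positivity
  have hsub : Finset.range (m'+1) ⊆ Finset.range (m+1) :=
    Finset.range_subset_range.mpr (by omega)
  have hsum1 : ∑ j ∈ Finset.range (m'+1),
        (n.choose (M - j) : ℝ) * (q^(M - j) * r^(n - (M - j)))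
      ≤ ∑ j ∈ Finset.range (m+1),
        (n.choose (M - j) : ℝ) * (q^(M - j) * r^(n - (M - j))) :=
    Finset.sum_le_sum_of_subset_of_nonneg hsub (fun i hi _ => hterm0 i hi)
  have hsum2 : ((m':ℝ)+1) * (Real.exp (-4) * (Real.exp (-h^2*n)/(8*Real.sqrt n)))
      ≤ ∑ j ∈ Finset.range (m'+1),
        (n.choose (M - j) : ℝ) * (q^(M - j) * r^(n - (M - j))) := by
    have := Finset.card_nsmul_le_sum (Finset.range (m'+1))
      (fun j => (n.choose (M - j) : ℝ) * (q^(M - j) * r^(n - (M - j))))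
      (Real.exp (-4) * (Real.exp (-h^2*n)/(8*Real.sqrt n)))
      (fun j hj => stepB j (Nat.lt_succ_iff.mp (Finset.mem_range.mp hj)))
    rw [Finset.card_range, nsmul_eq_mul] at this
    push_cast at this
    exact this
  -- Step D : count bound
  set u := Real.sqrt n with hu
  have hu1 : (1:ℝ) ≤ u := by
    rw [hu]
    have : (1:ℝ) ≤ (n:ℝ) := by exact_mod_cast hn
    nlinarith [Real.sq_sqrt (le_of_lt hNpos), Real.sqrt_nonneg (n:ℝ)]
  have hb1 : u ≤ (Nat.sqrt n : ℝ) + 1 := by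
    rw [hu]
    have hlt : n < (Nat.sqrt n + 1) * (Nat.sqrt n + 1) := Nat.lt_succ_sqrt n
    have hltR : (n:ℝ) ≤ ((Nat.sqrt n : ℝ) + 1)^2 := by
      have : (n:ℝ) < (((Nat.sqrt n + 1) * (Nat.sqrt n + 1) : ℕ) : ℝ) := by exact_mod_cast hlt
      push_cast at this
      nlinarith
    calc Real.sqrt n ≤ Real.sqrt (((Nat.sqrt n : ℝ) + 1)^2) := Real.sqrt_le_sqrt hltR
      _ = (Nat.sqrt n : ℝ) + 1 := Real.sqrt_sq (by positivity)
  have hmu : u/4 ≤ (m:ℝ) + 1 := by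
    have hcase : m = Nat.sqrt n / 4 ∨ m = M := by omega
    have hun : u ≤ (n:ℝ) := by
      rw [hu]
      have h1n : (1:ℝ) ≤ (n:ℝ) := by exact_mod_cast hn
      nlinarith [Real.sq_sqrt (le_of_lt hNpos), Real.sqrt_nonneg (n:ℝ)]
    rcases hcase with hc | hc <;> rw [hc]
    · have hnat : Nat.sqrt n ≤ 4 * (Nat.sqrt n / 4) + 3 := by omega
      have hnatR : (Nat.sqrt n : ℝ) ≤ 4 * ((Nat.sqrt n / 4 : ℕ):ℝ) + 3 := by exact_mod_cast hnat
      linarith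
    · have hMR : (n:ℝ) ≤ 2*(M:ℝ)+1 := by exact_mod_cast hN2
      linarith
  have hfl : 1/h < (⌊1/h⌋₊ : ℝ) + 1 := Nat.lt_floor_add_one _
  have hm'c : (min (u/4) (1/h)) ≤ (m':ℝ) + 1 := by
    have hcase : m' = m ∨ m' = ⌊1/h⌋₊ := by omega
    rcases hcase with hc | hc <;> rw [hc]
    · exact le_trans (min_le_left _ _) hmu
    · exact le_trans (min_le_right _ _) (le_of_lt hfl)
  have hmin : u * Real.exp (-(h*u)/4) / 16 ≤ min (u/4) (1/h) := by
    have hupos' : (0:ℝ) < u := by linarith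
    rcases le_or_gt (h*u) 1 with ht | ht
    · have hexple : Real.exp (-(h*u)/4) ≤ 1 := by
        apply Real.exp_le_one_iff.mpr  -- check name
        nlinarith
      apply le_min
      · nlinarith [mul_le_mul_of_nonneg_left hexple hupos'.le]
      · have hu1h : u ≤ 1/h := by
          rw [le_div_iff₀ h0]
          nlinarith
        nlinarith [mul_le_mul_of_nonneg_left hexple hupos'.le]
    · have hE : Real.exp (-(h*u)/4) ≤ 4/(h*u) := by
        rw [neg_div, Real.exp_neg, inv_le_comm₀ (Real.exp_pos _) (by positivity)]
        have h4 : (4/(h*u))⁻¹ = (h*u)/4 := by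
          rw [inv_div]
        rw [h4]
        linarith [Real.add_one_le_exp ((h*u)/4), Real.exp_pos ((h*u)/4)]
      have hkey : u * Real.exp (-(h*u)/4) / 16 ≤ 1/(4*h) := by
        calc u * Real.exp (-(h*u)/4) / 16 ≤ u * (4/(h*u)) / 16 := by
              gcongr
          _ = 1/(4*h) := by
              field_simp
              ring
      apply le_min
      · have : 1/h < u := by
          rw [div_lt_iff₀ h0]
          nlinarith
        have h14 : 1/(4*h) = (1/h)/4 := by ring
        linarith [hkey]
      · have : 1/(4*h) ≤ 1/h := by
          rw [div_le_div_iff₀ (by positivity) h0]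
          nlinarith
        linarith
  -- Step E : combine
  have hcount : u * Real.exp (-(h*u)/4) / 16 ≤ (m':ℝ) + 1 := le_trans hmin hm'c
  have hApos : (0:ℝ) ≤ Real.exp (-4) * (Real.exp (-h^2*n)/(8*Real.sqrt n)) := by positivity
  have hfinal : Real.exp (-4)/256 * Real.exp (-h^2*n) * Real.exp (-(h*Real.sqrt n)/4)
      ≤ ((m':ℝ)+1) * (Real.exp (-4) * (Real.exp (-h^2*n)/(8*Real.sqrt n))) := by
    have hstep := mul_le_mul_of_nonneg_right hcount hApos
    have heq : u * Real.exp (-(h*u)/4) / 16 *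
        (Real.exp (-4) * (Real.exp (-h^2*n)/(8*Real.sqrt n)))
        = Real.exp (-4)/128 * Real.exp (-h^2*n) * Real.exp (-(h*u)/4) := by
      have hne : u ≠ 0 := ne_of_gt hupos
      field_simp
      ring
    rw [heq] at hstep
    refine le_trans ?_ hstep
    rw [← hu]
    have he1 : (0:ℝ) < Real.exp (-h^2*n) := Real.exp_pos _
    have he2 : (0:ℝ) < Real.exp (-(h*u)/4) := Real.exp_pos _
    have he4 : (0:ℝ) < Real.exp (-4) := Real.exp_pos _
    apply mul_le_mul_of_nonneg_right _ he2.le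
    apply mul_le_mul_of_nonneg_right _ he1.le
    linarith
  calc Real.exp (-4)/256 * Real.exp (-h^2*n) * Real.exp (-(h*Real.sqrt n)/4)
      ≤ ((m':ℝ)+1) * (Real.exp (-4) * (Real.exp (-h^2*n)/(8*Real.sqrt n))) := hfinal
    _ ≤ ∑ j ∈ Finset.range (m'+1),
        (n.choose (M - j) : ℝ) * (q^(M - j) * r^(n - (M - j))) := hsum2
    _ ≤ ∑ j ∈ Finset.range (m+1),
        (n.choose (M - j) : ℝ) * (q^(M - j) * r^(n - (M - j))) := hsum1




set_option maxHeartbeats 1000000 in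
/-- Lower bound for the probability that the empirical mean of `n` i.i.d. `±1`
variables with mean `h ∈ (0, 1/2]` is nonpositive: there is a universal constant
`c > 0` with `P(ξ ≤ 0) ≥ c·e^{-h²n}·e^{-h√n/4}`. -/
theorem stmt9 :
    ∃ c : ℝ, 0 < c ∧
      ∀ {Ω : Type} [MeasurableSpace Ω] (μ : Measure Ω), ∀ _ : IsProbabilityMeasure μ,
        ∀ (n : ℕ) (_ : 1 ≤ n) (h : ℝ) (_ : 0 < h) (_ : h ≤ 1 / 2)
          (X : Fin n → Ω → ℝ) (_ : ∀ i, Measurable (X i))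
          (_ : ∀ b : Fin n → Bool,
            μ {ω | ∀ i, X i ω = (if b i then 1 else -1)}
              = ∏ i, ENNReal.ofReal (if b i then (1 + h) / 2 else (1 - h) / 2)),
        ENNReal.ofReal (c * Real.exp (-h ^ 2 * n) * Real.exp (-(h * Real.sqrt n) / 4))
          ≤ μ {ω | (1 / (n : ℝ)) * ∑ i, X i ω ≤ 0} := by
  classical
  refine ⟨Real.exp (-4)/256, by positivity, ?_⟩
  intro Ω _ μ hμ n hn h h0 h2 X hXm hXd
  set M := n / 2 with hM
  set m := min (Nat.sqrt n / 4) M with hm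
  have hmM : m ≤ M := min_le_right _ _
  set q : ℝ := (1+h)/2 with hqdef
  set r : ℝ := (1-h)/2 with hrdef
  have hq : (0:ℝ) ≤ q := by rw [hqdef]; linarith
  have hr : (0:ℝ) ≤ r := by rw [hrdef]; linarith
  set E : (Fin n → Bool) → Set Ω :=
    fun b => {ω | ∀ i, X i ω = (if b i then 1 else -1)} with hE
  set toB : Finset (Fin n) → (Fin n → Bool) := fun s i => decide (i ∈ s) with htoB
  have toB_inj : Function.Injective toB := by
    intro s t hst
    ext i
    have h1 := congrFun hst i
    simp only [htoB, decide_eq_decide] at h1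
    exact h1
  set B : Finset (Fin n → Bool) :=
    (Finset.range (m+1)).biUnion
      (fun j => (Finset.powersetCard (M - j) (Finset.univ : Finset (Fin n))).image toB)
    with hB
  have hEmeas : ∀ b, MeasurableSet (E b) := by
    intro b
    have hset : E b = ⋂ i, X i ⁻¹' {(if b i then (1:ℝ) else -1)} := by
      ext ω
      simp [hE, Set.mem_iInter]
    rw [hset]
    exact MeasurableSet.iInter (fun i => hXm i (measurableSet_singleton _))
  have hdisj : (B : Set (Fin n → Bool)).Pairwise (Function.onFun Disjoint E) := by
    intro b _ b' _ hne
    rw [Function.onFun, Set.disjoint_left]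
    intro ω hb hb'
    apply hne
    funext i
    have h1 : X i ω = (if b i then (1:ℝ) else -1) := hb i
    have h2 : X i ω = (if b' i then (1:ℝ) else -1) := hb' i
    have h3 : (if b i then (1:ℝ) else -1) = (if b' i then (1:ℝ) else -1) := by
      rw [← h1, h2]
    cases hbb : b i <;> cases hbb' : b' i <;>
      simp [hbb, hbb'] at h3 ⊢ <;> norm_num at h3
  have hsubset : (⋃ b ∈ B, E b) ⊆ {ω | (1/(n:ℝ)) * ∑ i, X i ω ≤ 0} := by
    intro ω hω
    simp only [Set.mem_iUnion] at hω
    obtain ⟨b, hbB, hbω⟩ := hω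
    rw [hB] at hbB
    obtain ⟨j, hj, hbim⟩ := Finset.mem_biUnion.mp hbB
    obtain ⟨s, hs, hsb⟩ := Finset.mem_image.mp hbim
    have hscard : s.card = M - j := (Finset.mem_powersetCard.mp hs).2
    have hsum : ∑ i, X i ω = 2*(s.card:ℝ) - n := by
      have hXi : ∀ i, X i ω = (if i ∈ s then (1:ℝ) else -1) := by
        intro i
        have := hbω i
        rw [← hsb] at this
        simpa [htoB] using this
      rw [Finset.sum_congr rfl (fun i _ => hXi i)]
      have hsplit : ∀ i : Fin n, (if i ∈ s then (1:ℝ) else -1)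
          = (if i ∈ s then (2:ℝ) else 0) - 1 := by
        intro i; split <;> norm_num
      rw [Finset.sum_congr rfl (fun i _ => hsplit i), Finset.sum_sub_distrib,
        Finset.sum_ite_mem, Finset.univ_inter, Finset.sum_const, Finset.sum_const,
        Finset.card_univ, Fintype.card_fin]
      push_cast
      ring
    have hcard2 : 2 * s.card ≤ n := by omega
    have hcard2R : 2*(s.card:ℝ) ≤ n := by exact_mod_cast hcard2
    have hn0 : (0:ℝ) ≤ 1/(n:ℝ) := by positivity
    show (1/(n:ℝ)) * ∑ i, X i ω ≤ 0
    rw [hsum]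
    have hle : 2*(s.card:ℝ) - n ≤ 0 := by linarith
    have hres := mul_le_mul_of_nonneg_left hle hn0
    simpa using hres
  have hEval : ∀ s : Finset (Fin n),
      μ (E (toB s)) = ENNReal.ofReal (q^s.card * r^(n - s.card)) := by
    intro s
    have hXb := hXd (toB s)
    have hEeq : E (toB s) = {ω | ∀ i, X i ω = (if toB s i then 1 else -1)} := rfl
    rw [hEeq, hXb]
    have hprod : ∀ i : Fin n, ENNReal.ofReal (if toB s i then (1+h)/2 else (1-h)/2)
        = ENNReal.ofReal (if i ∈ s then q else r) := by
      intro i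
      simp only [htoB, decide_eq_true_eq, hqdef, hrdef]
    rw [Finset.prod_congr rfl (fun i _ => hprod i)]
    rw [← ENNReal.ofReal_prod_of_nonneg]
    · congr 1
      rw [Finset.prod_ite]
      have hf1 : Finset.univ.filter (fun i => i ∈ s) = s := by
        ext i; simp
      have hf2 : (Finset.univ.filter (fun i => ¬ i ∈ s)) = sᶜ := by
        ext i; simp
      rw [hf1, hf2, Finset.prod_const, Finset.prod_const, Finset.card_compl,
        Fintype.card_fin]
    · intro i _
      split <;> assumption
  have hpair : (↑(Finset.range (m+1)) : Set ℕ).PairwiseDisjoint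
      (fun j => (Finset.powersetCard (M - j) (Finset.univ : Finset (Fin n))).image toB) := by
    intro j1 hj1 j2 hj2 hne
    simp only [Finset.mem_coe, Finset.mem_range] at hj1 hj2
    rw [Function.onFun, Finset.disjoint_left]
    intro b hb1 hb2
    obtain ⟨s1, hs1, hsb1⟩ := Finset.mem_image.mp hb1
    obtain ⟨s2, hs2, hsb2⟩ := Finset.mem_image.mp hb2
    have hc1 : s1.card = M - j1 := (Finset.mem_powersetCard.mp hs1).2
    have hc2 : s2.card = M - j2 := (Finset.mem_powersetCard.mp hs2).2
    have hss : s1 = s2 := toB_inj (hsb1.trans hsb2.symm)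
    have e1 : j1 ≤ M := le_trans (Nat.lt_succ_iff.mp hj1) hmM
    have e2 : j2 ≤ M := le_trans (Nat.lt_succ_iff.mp hj2) hmM
    have hMj : M - j1 = M - j2 := by rw [← hc1, hss, hc2]
    exact hne (by omega)
  have hsumB : ∑ b ∈ B, μ (E b)
      = ∑ j ∈ Finset.range (m+1),
          (n.choose (M - j) : ℝ≥0∞) * ENNReal.ofReal (q^(M-j) * r^(n - (M-j))) := by
    rw [hB, Finset.sum_biUnion hpair]
    apply Finset.sum_congr rfl
    intro j hj
    rw [Finset.sum_image (fun a _ b _ hab => toB_inj hab)]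
    have hterm : ∀ s ∈ Finset.powersetCard (M - j) (Finset.univ : Finset (Fin n)),
        μ (E (toB s)) = ENNReal.ofReal (q^(M-j) * r^(n - (M-j))) := by
      intro s hs
      rw [hEval s, (Finset.mem_powersetCard.mp hs).2]
    rw [Finset.sum_congr rfl hterm, Finset.sum_const, Finset.card_powersetCard,
      Finset.card_univ, Fintype.card_fin, nsmul_eq_mul]
  -- final chain
  have hkey := key_real n hn h h0 h2
  calc ENNReal.ofReal (Real.exp (-4)/256 * Real.exp (-h^2*n) * Real.exp (-(h*Real.sqrt n)/4))
      ≤ ENNReal.ofReal (∑ j ∈ Finset.range (m+1),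
          (n.choose (M - j) : ℝ) * (q^(M-j) * r^(n - (M-j)))) := by
        apply ENNReal.ofReal_le_ofReal
        exact hkey
    _ = ∑ j ∈ Finset.range (m+1),
          ENNReal.ofReal ((n.choose (M - j) : ℝ) * (q^(M-j) * r^(n - (M-j)))) := by
        rw [ENNReal.ofReal_sum_of_nonneg]
        intro j _
        positivity
    _ = ∑ j ∈ Finset.range (m+1),
          (n.choose (M - j) : ℝ≥0∞) * ENNReal.ofReal (q^(M-j) * r^(n - (M-j))) := by
        apply Finset.sum_congr rfl
        intro j _
        rw [ENNReal.ofReal_mul (by positivity), ENNReal.ofReal_natCast]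
    _ = ∑ b ∈ B, μ (E b) := hsumB.symm
    _ = μ (⋃ b ∈ B, E b) := (measure_biUnion_finset hdisj (fun b _ => hEmeas b)).symm
    _ ≤ μ {ω | (1/(n:ℝ)) * ∑ i, X i ω ≤ 0} := measure_mono hsubset
end

section
/- Let φ̃ : [−1,1] → [−1,1] be 1-Lipschitz and odd, and φ̄(z) = z. Let two pair-processes (X̃^1 ≤ X̃^2) and (X̄^1 ≤ X̄^2) be constructed on the same i.i.d. uniform sequence, with conditional flip probabilities determined by h·φ̃ and h·φ̄ respectively (0 < h ≤ 1/2) applied to averages over the same finite sets S_t, starting from boundary conditions with X̃^i_s = X̄^i_s for s in the boundary. Then almost surely, for all t: if X̃^2_t ≠ X̃^1_t then X̄^2_t ≠ X̄^1_t; i.e., the linear-rule pair has at least as many discrepancies as the Lipschitz-rule pair. -/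
/-- The conditional probability of a `+` spin at time `t` for the majority rule `φ`,
strength `h`, and dependence set `S`: `g(+|z) = (1/2)(1 + h·φ(avg of z over S))`. -/
noncomputable def gv (φ : ℝ → ℝ) (h : ℝ) (S : Finset ℤ) (z : ℤ → ℝ) : ℝ :=
  (1 / 2) * (1 + h * φ ((∑ s ∈ S, z s) / (S.card : ℝ)))

/-- Discrepancy domination for the coupled pair dynamics: if the pair processes
`(X̃¹ ≤ X̃²)` (rule `φ̃`, 1-Lipschitz and odd) and `(X̄¹ ≤ X̄²)` (linear rule
`φ̄ = id`) are driven by the same uniforms `u` with the same boundary conditions,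
then at every time a discrepancy of the `φ̃`-pair forces a discrepancy of the
linear pair. -/
theorem stmt16 (φt : ℝ → ℝ)
    (hodd : ∀ z, φt (-z) = -φt z)
    (hlip : ∀ z₁ z₂, |φt z₂ - φt z₁| ≤ |z₂ - z₁|)
    (hrange : ∀ z ∈ Set.Icc (-1 : ℝ) 1, φt z ∈ Set.Icc (-1 : ℝ) 1)
    (h : ℤ → ℝ) (hh : ∀ t, 0 < h t ∧ h t ≤ 1 / 2)
    (S : ℤ → Finset ℤ) (hS : ∀ t, (S t).Nonempty ∧ ∀ s ∈ S t, s < t)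
    (u : ℤ → ℝ) (hu : ∀ t, 0 ≤ u t ∧ u t ≤ 1)
    (Xt1 Xt2 Xb1 Xb2 : ℤ → ℝ)
    (hbdry : ∀ s : ℤ, s < 0 →
      Xt1 s = Xb1 s ∧ Xt2 s = Xb2 s ∧ Xt1 s ≤ Xt2 s ∧
      (Xt1 s = -1 ∨ Xt1 s = 1) ∧ (Xt2 s = -1 ∨ Xt2 s = 1))
    (hrec : ∀ t : ℤ, 0 ≤ t →
      (Xt2 t = if u t < gv φt (h t) (S t) Xt2 then 1 else -1) ∧
      (Xt1 t = if gv φt (h t) (S t) Xt2 - gv φt (h t) (S t) Xt1 ≤ u t ∧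
                  u t < gv φt (h t) (S t) Xt2 then 1 else -1) ∧
      (Xb2 t = if u t < gv id (h t) (S t) Xb2 then 1 else -1) ∧
      (Xb1 t = if gv id (h t) (S t) Xb2 - gv id (h t) (S t) Xb1 ≤ u t ∧
                  u t < gv id (h t) (S t) Xb2 then 1 else -1)) :
    ∀ t : ℤ, Xt1 t ≠ Xt2 t → Xb1 t ≠ Xb2 t := by
  have hcardpos : ∀ t : ℤ, 0 < ((S t).card : ℝ) := by
    intro t
    exact_mod_cast Finset.card_pos.mpr (hS t).1
  have hspin : ∀ s : ℤ, (Xt1 s = -1 ∨ Xt1 s = 1) ∧ (Xt2 s = -1 ∨ Xt2 s = 1) ∧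
      (Xb1 s = -1 ∨ Xb1 s = 1) ∧ (Xb2 s = -1 ∨ Xb2 s = 1) := by
    intro s
    rcases lt_or_ge s 0 with hs | hs
    · obtain ⟨e1, e2, _, p1, p2⟩ := hbdry s hs
      exact ⟨p1, p2, e1 ▸ p1, e2 ▸ p2⟩
    · obtain ⟨r2, r1, rb2, rb1⟩ := hrec s hs
      refine ⟨?_, ?_, ?_, ?_⟩
      · rw [r1]; split <;> simp
      · rw [r2]; split <;> simp
      · rw [rb1]; split <;> simp
      · rw [rb2]; split <;> simp
  have hordt : ∀ s : ℤ, Xt1 s ≤ Xt2 s := by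
    intro s
    rcases lt_or_ge s 0 with hs | hs
    · exact (hbdry s hs).2.2.1
    · obtain ⟨r2, r1, _, _⟩ := hrec s hs
      rw [r1, r2]
      split
      · next hc => rw [if_pos hc.2]
      · split <;> norm_num
  have hordb : ∀ s : ℤ, Xb1 s ≤ Xb2 s := by
    intro s
    rcases lt_or_ge s 0 with hs | hs
    · obtain ⟨e1, e2, hle, _, _⟩ := hbdry s hs
      rw [← e1, ← e2]; exact hle
    · obtain ⟨_, _, rb2, rb1⟩ := hrec s hs
      rw [rb1, rb2]
      split
      · next hc => rw [if_pos hc.2]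
      · split <;> norm_num
  have havg : ∀ z : ℤ → ℝ, (∀ s, z s = -1 ∨ z s = 1) → ∀ t : ℤ,
      |(∑ s ∈ S t, z s) / ((S t).card : ℝ)| ≤ 1 := by
    intro z hz t
    rw [abs_div, abs_of_pos (hcardpos t), div_le_one (hcardpos t)]
    calc |∑ s ∈ S t, z s| ≤ ∑ s ∈ S t, |z s| := Finset.abs_sum_le_sum_abs _ _
      _ = ∑ s ∈ S t, 1 := by
          apply Finset.sum_congr rfl
          intro s _
          rcases hz s with h' | h' <;> simp [h']
      _ = ((S t).card : ℝ) := by simp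
  -- key invariant by strong induction
  have key : ∀ n : ℕ, ∀ t : ℤ, t < (n : ℤ) → Xt2 t - Xt1 t ≤ Xb2 t - Xb1 t := by
    intro n
    induction n with
    | zero =>
      intro t ht
      obtain ⟨e1, e2, _, _, _⟩ := hbdry t (by exact_mod_cast ht)
      rw [e1, e2]
    | succ n ih =>
      intro t ht
      rcases lt_or_ge t (n : ℤ) with htn | htn
      · exact ih t htn
      have hteq : t = (n : ℤ) := by omega
      have ht0 : (0 : ℤ) ≤ t := by omega
      by_cases heq : Xt1 t = Xt2 t
      · rw [heq]
        simp only [sub_self]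
        linarith [hordb t]
      -- discrepancy at time t for the φt pair
      obtain ⟨r2, r1, rb2, rb1⟩ := hrec t ht0
      have hgap : u t < gv φt (h t) (S t) Xt2 - gv φt (h t) (S t) Xt1 := by
        by_cases hc : u t < gv φt (h t) (S t) Xt2
        · have h2 : Xt2 t = 1 := by rw [r2, if_pos hc]
          by_contra hnot
          push_neg at hnot
          have h1 : Xt1 t = 1 := by rw [r1, if_pos ⟨hnot, hc⟩]
          exact heq (h1.trans h2.symm)
        · have h2 : Xt2 t = -1 := by rw [r2, if_neg hc]
          have h1 : Xt1 t = -1 := by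
            rw [r1, if_neg]
            intro hcond
            exact hc hcond.2
          exact absurd (h1.trans h2.symm) heq
      have hcd := hcardpos t
      have hh0 := (hh t).1
      -- gap comparison
      have hgapcmp : gv φt (h t) (S t) Xt2 - gv φt (h t) (S t) Xt1 ≤
          gv id (h t) (S t) Xb2 - gv id (h t) (S t) Xb1 := by
        set a1 := (∑ s ∈ S t, Xt1 s) / ((S t).card : ℝ) with ha1
        set a2 := (∑ s ∈ S t, Xt2 s) / ((S t).card : ℝ) with ha2
        set b1 := (∑ s ∈ S t, Xb1 s) / ((S t).card : ℝ) with hb1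
        set b2 := (∑ s ∈ S t, Xb2 s) / ((S t).card : ℝ) with hb2
        have e1 : gv φt (h t) (S t) Xt2 - gv φt (h t) (S t) Xt1
            = (h t / 2) * (φt a2 - φt a1) := by
          simp only [gv, ← ha1, ← ha2]; ring
        have e2 : gv id (h t) (S t) Xb2 - gv id (h t) (S t) Xb1
            = (h t / 2) * (b2 - b1) := by
          simp only [gv, id, ← hb1, ← hb2]; ring
        rw [e1, e2]
        have hsumle : a2 - a1 ≤ b2 - b1 := by
          rw [ha1, ha2, hb1, hb2, div_sub_div_same, div_sub_div_same]
          apply div_le_div_of_nonneg_right ?_ hcd.le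
          rw [← Finset.sum_sub_distrib, ← Finset.sum_sub_distrib]
          apply Finset.sum_le_sum
          intro s hs
          exact ih s (by have := (hS t).2 s hs; omega)
        have ha21 : 0 ≤ a2 - a1 := by
          rw [ha1, ha2]
          apply sub_nonneg.mpr
          apply div_le_div_of_nonneg_right ?_ hcd.le
          exact Finset.sum_le_sum fun s _ => hordt s
        have hφ : φt a2 - φt a1 ≤ b2 - b1 :=
          le_trans (le_trans (le_abs_self _) (le_trans (hlip a1 a2)
            (by rw [abs_of_nonneg ha21]))) hsumle
        exact mul_le_mul_of_nonneg_left hφ (by linarith)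
      -- conclude: the linear pair has a discrepancy
      have hub : u t < gv id (h t) (S t) Xb2 - gv id (h t) (S t) Xb1 :=
        lt_of_lt_of_le hgap hgapcmp
      have hb1nn : 0 ≤ gv id (h t) (S t) Xb1 := by
        have := havg Xb1 (fun s => (hspin s).2.2.1) t
        have hb1a := abs_le.mp this
        have hhle := (hh t).2
        simp only [gv, id]
        nlinarith [hb1a.1, hb1a.2]
      have hXb2 : Xb2 t = 1 := by
        rw [rb2, if_pos (by linarith)]
      have hXb1 : Xb1 t = -1 := by
        rw [rb1, if_neg]
        intro hcond
        linarith [hcond.1]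
      rw [hXb1, hXb2]
      rcases (hspin t).1 with h1 | h1 <;> rcases (hspin t).2.1 with h2 | h2 <;>
        rw [h1, h2] <;> norm_num
  intro t hne
  have hlt : t < ((t.toNat + 1 : ℕ) : ℤ) := by
    push_cast
    omega
  have hd := key (t.toNat + 1) t hlt
  intro hbe
  rw [hbe, sub_self] at hd
  have h1 : Xt1 t = -1 := by
    rcases (hspin t).1 with h1 | h1
    · exact h1
    · rcases (hspin t).2.1 with h2 | h2
      · linarith [hordt t, h1 ▸ h2 ▸ hordt t]
      · exact absurd (h1.trans h2.symm) hne
  have h2 : Xt2 t = 1 := by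
    rcases (hspin t).2.1 with h2 | h2
    · exact absurd (h1.trans h2.symm) hne
    · exact h2
  rw [h1, h2] at hd
  norm_num at hd
end
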